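/- Let N ≥ 2 be an integer, t₀ ≥ 1 and β ≥ 0. Then the function Φ_β(x,t) = (t₀+t)^{−β} exp(−|x|²/(4(t₀+t))) M(N/2−β, N/2; |x|²/(4(t₀+t))) satisfies the heat equation ∂_tΦ_β(x,t) = ΔΦ_β(x,t) for all (x,t) ∈ ℝ^N × [0,∞). -/

import Mathlib

open MeasureTheory Real

/-- Kummer's confluent hypergeometric function `M(a,c;z) = ∑ (a)_n/(c)_n zⁿ/n!`. -/
noncomputable def kummerM (a c z : ℝ) : ℝ :=
  ∑' n : ℕ, ((ascPochhammer ℝ n).eval a / (ascPochhammer ℝ n).eval c) * z ^ n / (n.factorial : ℝ)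

/-- The weight function
`Φ_β(x,t) = (t₀+t)^{-β} exp(-|x|²/(4(t₀+t))) M(N/2-β, N/2; |x|²/(4(t₀+t)))`. -/
noncomputable def Phi (N : ℕ) (t₀ β : ℝ) (x : EuclideanSpace ℝ (Fin N)) (t : ℝ) : ℝ :=
  (t₀ + t) ^ (-β) * Real.exp (-‖x‖ ^ 2 / (4 * (t₀ + t))) *
    kummerM ((N : ℝ) / 2 - β) ((N : ℝ) / 2) (‖x‖ ^ 2 / (4 * (t₀ + t)))

/-- The Laplacian (in the space variable) of a function on `ℝ^N`. -/
noncomputable def laplacian {N : ℕ} (f : EuclideanSpace ℝ (Fin N) → ℝ)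
    (x : EuclideanSpace ℝ (Fin N)) : ℝ :=
  ∑ i : Fin N, fderiv ℝ (fun y => fderiv ℝ f y (EuclideanSpace.single i 1)) x
    (EuclideanSpace.single i 1)

set_option maxHeartbeats 1000000

section KummerAuxSection
open Filter Metric

namespace KAux

noncomputable def asc (q : ℝ) (n : ℕ) : ℝ := (ascPochhammer ℝ n).eval q

lemma asc_zero (q : ℝ) : asc q 0 = 1 := by simp [asc]

lemma asc_succ (q : ℝ) (n : ℕ) : asc q (n + 1) = asc q n * (q + n) := by
  simp [asc, ascPochhammer_succ_right, Polynomial.eval_mul]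

lemma asc_succ_left (q : ℝ) (n : ℕ) : asc q (n + 1) = q * asc (q + 1) n := by
  simp [asc, ascPochhammer_succ_left, Polynomial.eval_comp]

lemma asc_pos {q : ℝ} (hq : 0 < q) (n : ℕ) : 0 < asc q n :=
  ascPochhammer_pos n q hq

lemma abs_asc_le (a : ℝ) (n : ℕ) : |asc a n| ≤ asc (|a| + 1) n := by
  induction n with
  | zero => simp [asc_zero]
  | succ n ih =>
    rw [asc_succ, asc_succ, abs_mul]
    have h1 : |a + n| ≤ |a| + 1 + n := by
      calc |a + n| ≤ |a| + |(n:ℝ)| := abs_add_le a n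
      _ ≤ |a| + 1 + n := by rw [abs_of_nonneg (n.cast_nonneg : (0:ℝ) ≤ n)]; linarith [abs_nonneg a]
    have h2 : (0:ℝ) ≤ |a + n| := abs_nonneg _
    have h3 : (0:ℝ) ≤ |asc a n| := abs_nonneg _
    have h4 : (0:ℝ) < asc (|a|+1) n := asc_pos (by positivity) n
    nlinarith

lemma factorial_le_asc {q : ℝ} (hq : 1 ≤ q) (n : ℕ) : (n.factorial : ℝ) ≤ asc q n := by
  induction n with
  | zero => simp [asc_zero]
  | succ n ih =>
    rw [asc_succ]
    have h1 : (0:ℝ) < n.factorial := by positivity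
    have h2 : ((n+1).factorial : ℝ) = (n.factorial : ℝ) * (n + 1) := by
      rw [Nat.factorial_succ]; push_cast; ring
    rw [h2]
    have : (n:ℝ) + 1 ≤ q + n := by linarith
    nlinarith

lemma summable_base {q R : ℝ} (hq : 1 ≤ q) (hR : 0 < R) :
    Summable (fun n : ℕ => asc q n * R ^ n / ((n.factorial : ℝ)) ^ 2) := by
  have hq0 : (0:ℝ) < q := by linarith
  have hpos : ∀ n : ℕ, 0 < asc q n * R ^ n / ((n.factorial : ℝ)) ^ 2 := by
    intro n
    have := asc_pos hq0 n
    positivity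
  apply summable_of_ratio_test_tendsto_lt_one (l := 0) one_pos
    (Eventually.of_forall fun n => (hpos n).ne')
  have heq : ∀ n : ℕ, ‖asc q (n+1) * R ^ (n+1) / (((n+1).factorial : ℝ)) ^ 2‖ /
      ‖asc q n * R ^ n / ((n.factorial : ℝ)) ^ 2‖ = (q + n) * R / ((n:ℝ) + 1) ^ 2 := by
    intro n
    rw [Real.norm_eq_abs, Real.norm_eq_abs, abs_of_pos (hpos (n+1)), abs_of_pos (hpos n)]
    have h1 : (0:ℝ) < asc q n := asc_pos hq0 n
    have h2 : (0:ℝ) < (n.factorial : ℝ) := by positivity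
    have h3 : (0:ℝ) < R ^ n := by positivity
    have h4 : ((n+1).factorial : ℝ) = (n.factorial : ℝ) * ((n:ℝ) + 1) := by
      rw [Nat.factorial_succ]; push_cast; ring
    rw [asc_succ, h4, pow_succ]
    field_simp
  simp_rw [heq]
  have hb : Tendsto (fun n : ℕ => (q + 1) * R * (1 / ((n:ℝ) + 1))) atTop (nhds 0) := by
    have := tendsto_one_div_add_atTop_nhds_zero_nat (𝕜 := ℝ)
    simpa using this.const_mul ((q + 1) * R)
  apply squeeze_zero (fun n => by positivity) _ hb
  intro n
  have h5 : (0:ℝ) < ((n:ℝ) + 1) := by positivity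
  rw [div_le_iff₀ (by positivity)]
  have : q + (n:ℝ) ≤ (q + 1) * ((n:ℝ) + 1) := by nlinarith [n.cast_nonneg (α := ℝ)]
  calc (q + n) * R ≤ ((q+1) * ((n:ℝ)+1)) * R := by nlinarith
  _ = (q + 1) * R * (1 / ((n:ℝ) + 1)) * ((n:ℝ)+1)^2 := by field_simp


lemma C_nonneg {u : ℕ → ℝ} {C q : ℝ}
    (hu : ∀ n : ℕ, |u n| ≤ C * asc q n / ((n.factorial : ℝ)) ^ 2) : 0 ≤ C := by
  have := hu 0
  simp [asc_zero] at this
  exact le_trans (abs_nonneg _) this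

lemma summable_pow {u : ℕ → ℝ} {C q : ℝ} (hq : 1 ≤ q)
    (hu : ∀ n : ℕ, |u n| ≤ C * asc q n / ((n.factorial : ℝ)) ^ 2) (z : ℝ) :
    Summable (fun n : ℕ => u n * z ^ n) := by
  have hC := C_nonneg hu
  set R := |z| + 1 with hR
  have hR0 : 0 < R := by positivity
  apply Summable.of_norm
  refine Summable.of_nonneg_of_le (fun n => norm_nonneg _) (fun n => ?_)
    ((summable_base hq hR0).mul_left C)
  rw [norm_mul, norm_pow, Real.norm_eq_abs, Real.norm_eq_abs]
  have h1 : |z| ^ n ≤ R ^ n := pow_le_pow_left₀ (abs_nonneg z) (by linarith) n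
  have h2 : (0:ℝ) < asc q n := asc_pos (by linarith) n
  have h3 : (0:ℝ) < ((n.factorial : ℝ)) ^ 2 := by positivity
  calc |u n| * |z| ^ n ≤ (C * asc q n / ((n.factorial : ℝ)) ^ 2) * R ^ n := by
        apply mul_le_mul (hu n) h1 (by positivity)
        exact div_nonneg (mul_nonneg hC h2.le) h3.le
    _ = C * (asc q n * R ^ n / ((n.factorial : ℝ)) ^ 2) := by ring

lemma bnd_step {u : ℕ → ℝ} {C q : ℝ} (hq : 1 ≤ q)
    (hu : ∀ n : ℕ, |u n| ≤ C * asc q n / ((n.factorial : ℝ)) ^ 2) :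
    ∀ n : ℕ, |((n:ℝ) + 1) * u (n + 1)| ≤ (C * q) * asc (q + 1) n / ((n.factorial : ℝ)) ^ 2 := by
  intro n
  have hC := C_nonneg hu
  have hq0 : (0:ℝ) < q := by linarith
  have h2 : (0:ℝ) < (n.factorial : ℝ) := by positivity
  have hfs : ((n+1).factorial : ℝ) = (n.factorial : ℝ) * ((n:ℝ) + 1) := by
    rw [Nat.factorial_succ]; push_cast; ring
  have hp : (0:ℝ) < asc (q+1) n := asc_pos (by linarith) n
  rw [abs_mul]
  have h0 : |((n:ℝ) + 1)| = (n:ℝ) + 1 := abs_of_pos (by positivity)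
  rw [h0]
  calc ((n:ℝ) + 1) * |u (n+1)| ≤ ((n:ℝ) + 1) * (C * asc q (n+1) / (((n+1).factorial : ℝ)) ^ 2) := by
        apply mul_le_mul_of_nonneg_left (hu (n+1)) (by positivity)
    _ = C * q * asc (q+1) n / (((n.factorial : ℝ)) ^ 2 * ((n:ℝ)+1)) := by
        rw [asc_succ_left, hfs]; field_simp
    _ ≤ (C * q) * asc (q + 1) n / ((n.factorial : ℝ)) ^ 2 := by
        apply div_le_div_of_nonneg_left (by positivity) (by positivity)
        nlinarith

lemma hasDerivAt_pow_series {u : ℕ → ℝ} {C q : ℝ} (hq : 1 ≤ q)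
    (hu : ∀ n : ℕ, |u n| ≤ C * asc q n / ((n.factorial : ℝ)) ^ 2) (z : ℝ) :
    HasDerivAt (fun w => ∑' n : ℕ, u n * w ^ n) (∑' n : ℕ, ((n:ℝ) + 1) * u (n + 1) * z ^ n) z := by
  have hC := C_nonneg hu
  set R := |z| + 1 with hRdef
  have hR0 : 0 < R := by positivity
  have hR1 : 1 ≤ R := by rw [hRdef]; linarith [abs_nonneg z]
  -- summable bound
  have hbnd : Summable (fun n : ℕ => |u n| * n * R ^ n) := by
    refine Summable.of_nonneg_of_le (fun n => by positivity) (fun n => ?_)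
      ((summable_base hq (by linarith : (0:ℝ) < 2*R)).mul_left C)
    have h2 : (0:ℝ) < asc q n := asc_pos (by linarith) n
    have hn2 : (n:ℝ) ≤ 2 ^ n := by
      exact_mod_cast (Nat.lt_two_pow_self).le
    calc |u n| * n * R ^ n ≤ (C * asc q n / ((n.factorial : ℝ)) ^ 2) * (2 ^ n * R ^ n) := by
          have h3 : |u n| * (n:ℝ) ≤ (C * asc q n / ((n.factorial : ℝ)) ^ 2) * 2 ^ n := by
            exact mul_le_mul (hu n) hn2 (n.cast_nonneg)
              (div_nonneg (mul_nonneg hC h2.le) (by positivity))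
          have h4 : (0:ℝ) ≤ R ^ n := by positivity
          calc |u n| * n * R ^ n = (|u n| * n) * R ^ n := by ring
            _ ≤ ((C * asc q n / ((n.factorial : ℝ)) ^ 2) * 2 ^ n) * R ^ n :=
                mul_le_mul_of_nonneg_right h3 h4
            _ = (C * asc q n / ((n.factorial : ℝ)) ^ 2) * (2 ^ n * R ^ n) := by ring
      _ = C * (asc q n * (2*R) ^ n / ((n.factorial : ℝ)) ^ 2) := by
          rw [mul_pow]; ring
  have key := hasDerivAt_tsum_of_isPreconnected (F := ℝ) (𝕜 := ℝ)
    (u := fun n : ℕ => |u n| * n * R ^ n)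
    (g := fun (n : ℕ) (w : ℝ) => u n * w ^ n)
    (g' := fun (n : ℕ) (w : ℝ) => u n * ((n:ℝ) * w ^ (n - 1)))
    hbnd isOpen_ball (convex_ball (0:ℝ) R).isPreconnected
    (fun n w _ => (hasDerivAt_pow n w).const_mul (u n))
    (fun n w hw => ?_) (y₀ := 0) ?_ (summable_pow hq hu 0) (y := z) ?_
  · -- convert the sum
    refine HasDerivAt.congr_deriv key ?_
    symm
    have hsum' : Summable (fun n : ℕ => u n * ((n:ℝ) * z ^ (n - 1))) := by
      apply Summable.of_norm
      apply Summable.of_nonneg_of_le (fun n => norm_nonneg _) _ hbnd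
      intro n
      rw [norm_mul, norm_mul, Real.norm_eq_abs, Real.norm_eq_abs, Real.norm_eq_abs, abs_pow]
      have h1 : |z| ^ (n-1) ≤ R ^ n := by
        calc |z| ^ (n-1) ≤ R ^ (n-1) := pow_le_pow_left₀ (abs_nonneg z) (by linarith) _
          _ ≤ R ^ n := pow_le_pow_right₀ hR1 (Nat.sub_le n 1)
      have h4 : |(n:ℝ)| = (n:ℝ) := abs_of_nonneg n.cast_nonneg
      rw [h4]
      calc |u n| * ((n:ℝ) * |z| ^ (n-1)) ≤ |u n| * ((n:ℝ) * R ^ n) := by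
            apply mul_le_mul_of_nonneg_left _ (abs_nonneg _)
            exact mul_le_mul_of_nonneg_left h1 n.cast_nonneg
        _ = |u n| * n * R ^ n := by ring
    rw [Summable.tsum_eq_zero_add hsum']
    simp only [Nat.cast_zero, Nat.add_sub_cancel]
    rw [zero_mul, mul_zero, zero_add]
    apply tsum_congr
    intro n
    push_cast
    ring
  · -- derivative bound on the ball
    rw [mem_ball, dist_zero_right, Real.norm_eq_abs] at hw
    rw [Real.norm_eq_abs, abs_mul, abs_mul]
    have h4 : |(n:ℝ)| = (n:ℝ) := abs_of_nonneg n.cast_nonneg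
    rw [h4]
    have h1 : |w| ^ (n-1) ≤ R ^ n := by
      calc |w| ^ (n-1) ≤ R ^ (n-1) := pow_le_pow_left₀ (abs_nonneg w) (le_of_lt hw) _
        _ ≤ R ^ n := pow_le_pow_right₀ hR1 (Nat.sub_le n 1)
    rw [abs_pow]
    calc |u n| * ((n:ℝ) * |w| ^ (n-1)) ≤ |u n| * ((n:ℝ) * R ^ n) := by
          apply mul_le_mul_of_nonneg_left _ (abs_nonneg _)
          exact mul_le_mul_of_nonneg_left h1 n.cast_nonneg
      _ = |u n| * n * R ^ n := by ring
  · rw [mem_ball, dist_zero_right, Real.norm_eq_abs]; simpa using hR0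
  · rw [mem_ball, dist_zero_right, Real.norm_eq_abs]; simp [hRdef]


-- the coefficient sequences
noncomputable def u0 (a c : ℝ) (n : ℕ) : ℝ := asc a n / asc c n / (n.factorial : ℝ)
noncomputable def u1 (a c : ℝ) (n : ℕ) : ℝ := ((n:ℝ) + 1) * u0 a c (n + 1)
noncomputable def u2 (a c : ℝ) (n : ℕ) : ℝ := ((n:ℝ) + 1) * u1 a c (n + 1)

noncomputable def MF (a c z : ℝ) : ℝ := ∑' n : ℕ, u0 a c n * z ^ n
noncomputable def MF1 (a c z : ℝ) : ℝ := ∑' n : ℕ, u1 a c n * z ^ n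
noncomputable def MF2 (a c z : ℝ) : ℝ := ∑' n : ℕ, u2 a c n * z ^ n

section
variable {a c : ℝ} (hc : 1 ≤ c)
include hc

lemma hu0 : ∀ n : ℕ, |u0 a c n| ≤ 1 * asc (|a| + 1) n / ((n.factorial : ℝ)) ^ 2 := by
  intro n
  have hcn : (0:ℝ) < asc c n := asc_pos (by linarith) n
  have hfn : (0:ℝ) < (n.factorial : ℝ) := by positivity
  rw [u0, abs_div, abs_div, abs_of_pos hcn, abs_of_pos hfn, one_mul]
  rw [div_div, pow_two]
  exact div_le_div₀ (asc_pos (show (0:ℝ) < |a|+1 by positivity) n).le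
    (abs_asc_le a n) (by positivity)
    (mul_le_mul_of_nonneg_right (factorial_le_asc hc n) hfn.le)

lemma hu1 : ∀ n : ℕ, |u1 a c n| ≤ (1 * (|a| + 1)) * asc ((|a| + 1) + 1) n /
    ((n.factorial : ℝ)) ^ 2 :=
  bnd_step (by linarith [abs_nonneg a]) (hu0 hc)

lemma hu2 : ∀ n : ℕ, |u2 a c n| ≤ ((1 * (|a| + 1)) * ((|a| + 1) + 1)) *
    asc (((|a| + 1) + 1) + 1) n / ((n.factorial : ℝ)) ^ 2 :=
  bnd_step (by linarith [abs_nonneg a]) (hu1 hc)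

lemma hasDerivAt_MF (z : ℝ) : HasDerivAt (MF a c) (MF1 a c z) z := by
  have h := hasDerivAt_pow_series (by linarith [abs_nonneg a]) (hu0 hc) z
  exact h

lemma hasDerivAt_MF1 (z : ℝ) : HasDerivAt (MF1 a c ·) (MF2 a c z) z := by
  have h := hasDerivAt_pow_series (by linarith [abs_nonneg a]) (hu1 hc) z
  exact h

lemma u0_rec (n : ℕ) : ((n:ℝ) + 1) * (c + n) * u0 a c (n + 1) = (a + n) * u0 a c n := by
  have hcn : (0:ℝ) < asc c n := asc_pos (by linarith) n
  have hccn : (0:ℝ) < c + n := by have := n.cast_nonneg (α := ℝ); linarith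
  have hfn : (0:ℝ) < (n.factorial : ℝ) := by positivity
  have hfs : ((n+1).factorial : ℝ) = (n.factorial : ℝ) * ((n:ℝ) + 1) := by
    rw [Nat.factorial_succ]; push_cast; ring
  rw [u0, u0, asc_succ, asc_succ, hfs]
  field_simp

lemma kummer_ode (z : ℝ) :
    z * MF2 a c z + (c - z) * MF1 a c z - a * MF a c z = 0 := by
  have S0 : Summable (fun n : ℕ => u0 a c n * z ^ n) := summable_pow (by linarith [abs_nonneg a]) (hu0 hc) z
  have S1 : Summable (fun n : ℕ => u1 a c n * z ^ n) := summable_pow (by linarith [abs_nonneg a]) (hu1 hc) z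
  have S2 : Summable (fun n : ℕ => u2 a c n * z ^ n) := summable_pow (by linarith [abs_nonneg a]) (hu2 hc) z
  -- h n = n * u0 n * z^n ; k n = n * u1 n * z^n
  set h : ℕ → ℝ := fun n => (n:ℝ) * u0 a c n * z ^ n with hh
  set k : ℕ → ℝ := fun n => (n:ℝ) * u1 a c n * z ^ n with hk
  have hshift : (fun n : ℕ => h (n + 1)) = fun n : ℕ => z * (u1 a c n * z ^ n) := by
    funext n; simp only [hh, u1]; push_cast; ring
  have kshift : (fun n : ℕ => k (n + 1)) = fun n : ℕ => z * (u2 a c n * z ^ n) := by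
    funext n; simp only [hk, u2]; push_cast; ring
  have Sh : Summable h := by
    rw [← summable_nat_add_iff 1, hshift]
    exact S1.mul_left z
  have Sk : Summable k := by
    rw [← summable_nat_add_iff 1, kshift]
    exact S2.mul_left z
  have e1 : z * MF1 a c z + a * MF a c z = ∑' n : ℕ, (a + n) * u0 a c n * z ^ n := by
    have t1 : z * MF1 a c z = ∑' n : ℕ, h n := by
      rw [MF1, ← tsum_mul_left, Summable.tsum_eq_zero_add Sh]
      simp only [hh]
      rw [Nat.cast_zero, zero_mul, zero_mul, zero_add]
      exact congrArg (fun f : ℕ → ℝ => ∑' n, f n) hshift.symm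
    have t2 : a * MF a c z = ∑' n : ℕ, a * (u0 a c n * z ^ n) := by
      rw [MF, ← tsum_mul_left]
    rw [t1, t2, ← Summable.tsum_add Sh (S0.mul_left a)]
    apply tsum_congr; intro n; simp only [hh]; ring
  have e2 : z * MF2 a c z + c * MF1 a c z = ∑' n : ℕ, (a + n) * u0 a c n * z ^ n := by
    have t1 : z * MF2 a c z = ∑' n : ℕ, k n := by
      rw [MF2, ← tsum_mul_left, Summable.tsum_eq_zero_add Sk]
      simp only [hk]
      rw [Nat.cast_zero, zero_mul, zero_mul, zero_add]
      exact congrArg (fun f : ℕ → ℝ => ∑' n, f n) kshift.symm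
    have t2 : c * MF1 a c z = ∑' n : ℕ, c * (u1 a c n * z ^ n) := by
      rw [MF1, ← tsum_mul_left]
    rw [t1, t2, ← Summable.tsum_add Sk (S1.mul_left c)]
    apply tsum_congr; intro n
    have hrec := u0_rec (a := a) (c := c) hc n
    simp only [hk, u1]
    linear_combination z ^ n * hrec
  linear_combination e2 - e1

end

-- W functions
noncomputable def W (a c z : ℝ) : ℝ := Real.exp (-z) * MF a c z
noncomputable def W1 (a c z : ℝ) : ℝ := Real.exp (-z) * (MF1 a c z - MF a c z)
noncomputable def W2 (a c z : ℝ) : ℝ :=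
  Real.exp (-z) * (MF2 a c z - 2 * MF1 a c z + MF a c z)

lemma hasDerivAt_exp_neg (z : ℝ) : HasDerivAt (fun w : ℝ => Real.exp (-w)) (-Real.exp (-z)) z := by
  simpa [Function.comp_def] using (Real.hasDerivAt_exp (-z)).comp z (hasDerivAt_neg z)

lemma hasDerivAt_W {a c : ℝ} (hc : 1 ≤ c) (z : ℝ) : HasDerivAt (W a c) (W1 a c z) z := by
  have h := (hasDerivAt_exp_neg z).mul (hasDerivAt_MF (a := a) hc z)
  refine h.congr_deriv ?_
  symm
  rw [W1]; ring

lemma hasDerivAt_W1 {a c : ℝ} (hc : 1 ≤ c) (z : ℝ) : HasDerivAt (W1 a c) (W2 a c z) z := by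
  have h := (hasDerivAt_exp_neg z).mul ((hasDerivAt_MF1 (a := a) hc z).sub (hasDerivAt_MF (a := a) hc z))
  refine h.congr_deriv ?_
  symm
  rw [W2]; simp only [Pi.sub_apply]; ring

lemma W_ode {a c : ℝ} (hc : 1 ≤ c) (z : ℝ) :
    z * W2 a c z + (c + z) * W1 a c z + (c - a) * W a c z = 0 := by
  have h := kummer_ode (a := a) hc z
  simp only [W, W1, W2]
  linear_combination Real.exp (-z) * h


end KAux

end KummerAuxSection

lemma kummerM_eq_MF (a c z : ℝ) : kummerM a c z = KAux.MF a c z := by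
  apply tsum_congr
  intro n
  rw [KAux.u0, KAux.asc, KAux.asc]
  ring

/-- `Φ_β` solves the heat equation `∂_t Φ_β = Δ Φ_β` on `ℝ^N × [0,∞)`. -/
theorem Phi_solves_heat_equation (N : ℕ) (hN : 2 ≤ N) (t₀ β : ℝ) (ht₀ : 1 ≤ t₀)
    (hβ : 0 ≤ β) (x : EuclideanSpace ℝ (Fin N)) (t : ℝ) (ht : 0 ≤ t) :
    deriv (fun s => Phi N t₀ β x s) t = laplacian (fun y => Phi N t₀ β y t) x := by
  have hτ : (0:ℝ) < t₀ + t := by linarith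
  have h4τ : (0:ℝ) < 4 * (t₀ + t) := by linarith
  set c : ℝ := (N : ℝ) / 2 with hcdef
  set a : ℝ := (N : ℝ) / 2 - β with hadef
  have hc : 1 ≤ c := by
    rw [hcdef]
    have : (2:ℝ) ≤ (N:ℝ) := by exact_mod_cast hN
    linarith
  set r : ℝ := ‖x‖ ^ 2 with hrdef
  set z : ℝ := r / (4 * (t₀ + t)) with hzdef
  -- ===== time derivative =====
  have hA : HasDerivAt (fun s : ℝ => (t₀ + s) ^ (-β)) (-β * (t₀ + t) ^ (-β - 1)) t := by
    have h0 : HasDerivAt (fun s : ℝ => t₀ + s) 1 t := (hasDerivAt_id t).const_add t₀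
    have h1 := (Real.hasDerivAt_rpow_const (x := t₀ + t) (p := -β) (Or.inl hτ.ne')).comp t h0
    simpa [Function.comp_def] using h1
  have hz : HasDerivAt (fun s : ℝ => r / (4 * (t₀ + s)))
      (r * (-(4 / (4 * (t₀ + t)) ^ 2))) t := by
    have h0 : HasDerivAt (fun s : ℝ => 4 * (t₀ + s)) 4 t := by
      simpa using ((hasDerivAt_id t).const_add t₀).const_mul 4
    have h1 := h0.inv h4τ.ne'
    have h2 := h1.const_mul r
    simpa [div_eq_mul_inv] using h2
  have hWc : HasDerivAt (fun s : ℝ => KAux.W a c (r / (4 * (t₀ + s))))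
      (KAux.W1 a c z * (r * (-(4 / (4 * (t₀ + t)) ^ 2)))) t :=
    (KAux.hasDerivAt_W hc z).comp (h := fun s : ℝ => r / (4 * (t₀ + s))) t hz
  have hPhiT : HasDerivAt (fun s => Phi N t₀ β x s)
      (-β * (t₀ + t) ^ (-β - 1) * KAux.W a c z +
        (t₀ + t) ^ (-β) * (KAux.W1 a c z * (r * (-(4 / (4 * (t₀ + t)) ^ 2))))) t := by
    have heq : (fun s => Phi N t₀ β x s)
        = fun s : ℝ => (t₀ + s) ^ (-β) * KAux.W a c (r / (4 * (t₀ + s))) := by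
      funext s
      rw [Phi, KAux.W, kummerM_eq_MF, neg_div]
      ring
    rw [heq]
    exact hA.mul hWc
  rw [hPhiT.deriv]
  -- ===== spatial laplacian =====
  set hval : ℝ → ℝ := fun s => (t₀ + t) ^ (-β) * KAux.W a c (s / (4 * (t₀ + t))) with hvaldef
  set D1 : ℝ → ℝ := fun s =>
    (t₀ + t) ^ (-β) * (KAux.W1 a c (s / (4 * (t₀ + t))) * (1 / (4 * (t₀ + t)))) with hD1def
  set D2 : ℝ → ℝ := fun s =>
    (t₀ + t) ^ (-β) * (KAux.W2 a c (s / (4 * (t₀ + t))) * (1 / (4 * (t₀ + t)))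
      * (1 / (4 * (t₀ + t)))) with hD2def
  have hdiv : ∀ s : ℝ, HasDerivAt (fun w : ℝ => w / (4 * (t₀ + t))) (1 / (4 * (t₀ + t))) s := by
    intro s
    simpa using (hasDerivAt_id s).div_const (4 * (t₀ + t))
  have hval1 : ∀ s : ℝ, HasDerivAt hval (D1 s) s := by
    intro s
    exact ((KAux.hasDerivAt_W hc _).comp s (hdiv s)).const_mul _
  have hval2 : ∀ s : ℝ, HasDerivAt D1 (D2 s) s := by
    intro s
    have h1 := ((KAux.hasDerivAt_W1 (a := a) hc _).comp s (hdiv s)).mul_const (1 / (4 * (t₀ + t)))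
    have h2 := h1.const_mul ((t₀ + t) ^ (-β))
    simpa [hD1def, hD2def, mul_assoc] using h2
  have hgfun : (fun y : EuclideanSpace ℝ (Fin N) => Phi N t₀ β y t) = fun y : EuclideanSpace ℝ (Fin N) => hval (‖y‖ ^ 2) := by
    funext y
    simp only [hvaldef]
    rw [Phi, KAux.W, kummerM_eq_MF, neg_div]
    ring
  have hnormsq : ∀ y : EuclideanSpace ℝ (Fin N), HasFDerivAt (fun y : EuclideanSpace ℝ (Fin N) => ‖y‖ ^ 2) (2 • (innerSL ℝ y)) y :=
    fun y => (hasStrictFDerivAt_norm_sq y).hasFDerivAt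
  have hgFD : ∀ y : EuclideanSpace ℝ (Fin N), HasFDerivAt (fun y : EuclideanSpace ℝ (Fin N) => hval (‖y‖ ^ 2))
      (D1 (‖y‖ ^ 2) • (2 • (innerSL ℝ y))) y :=
    fun y => (hval1 (‖y‖ ^ 2)).comp_hasFDerivAt (f := fun y : EuclideanSpace ℝ (Fin N) => ‖y‖ ^ 2) y (hnormsq y)
  have hfd1 : ∀ (y : EuclideanSpace ℝ (Fin N)) (i : Fin N),
      fderiv ℝ (fun y : EuclideanSpace ℝ (Fin N) => Phi N t₀ β y t) y (EuclideanSpace.single i 1)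
        = D1 (‖y‖ ^ 2) * (2 * y i) := by
    intro y i
    rw [hgfun, (hgFD y).fderiv]
    simp only [ContinuousLinearMap.smul_apply, innerSL_apply_apply, smul_eq_mul]
    rw [EuclideanSpace.inner_single_right]
    simp only [starRingEnd_apply, star_trivial, one_mul, nsmul_eq_mul, Nat.cast_ofNat]
  -- second derivatives
  have hfd2 : ∀ i : Fin N,
      fderiv ℝ (fun y => fderiv ℝ (fun y' : EuclideanSpace ℝ (Fin N) => Phi N t₀ β y' t) y
          (EuclideanSpace.single i 1)) x (EuclideanSpace.single i 1)
        = D1 (‖x‖ ^ 2) * 2 + 2 * x i * (D2 (‖x‖ ^ 2) * (2 * x i)) := by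
    intro i
    have hfun : (fun y => fderiv ℝ (fun y' : EuclideanSpace ℝ (Fin N) => Phi N t₀ β y' t) y
        (EuclideanSpace.single i 1))
        = fun y : EuclideanSpace ℝ (Fin N) => D1 (‖y‖ ^ 2) * (2 * y i) := by
      funext y; exact hfd1 y i
    rw [hfun]
    have h1 : HasFDerivAt (fun y : EuclideanSpace ℝ (Fin N) => D1 (‖y‖ ^ 2))
        (D2 (‖x‖ ^ 2) • (2 • (innerSL ℝ x))) x :=
      (hval2 (‖x‖ ^ 2)).comp_hasFDerivAt (f := fun y : EuclideanSpace ℝ (Fin N) => ‖y‖ ^ 2) x (hnormsq x)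
    have h2 : HasFDerivAt (fun y : EuclideanSpace ℝ (Fin N) => (2:ℝ) * y i)
        ((2:ℝ) • (EuclideanSpace.proj i : EuclideanSpace ℝ (Fin N) →L[ℝ] ℝ)) x :=
      (EuclideanSpace.proj i : EuclideanSpace ℝ (Fin N) →L[ℝ] ℝ).hasFDerivAt.const_mul 2
    have h3 : HasFDerivAt (fun y : EuclideanSpace ℝ (Fin N) => D1 (‖y‖ ^ 2) * (2 * y i)) _ x :=
      h1.mul h2
    rw [h3.fderiv]
    simp only [ContinuousLinearMap.add_apply, ContinuousLinearMap.smul_apply,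
      innerSL_apply_apply, smul_eq_mul, PiLp.proj_apply]
    rw [EuclideanSpace.inner_single_right]
    simp only [starRingEnd_apply, star_trivial, one_mul, nsmul_eq_mul, Nat.cast_ofNat,
      EuclideanSpace.single_apply, eq_self_iff_true, if_true]
    ring
  have hlap : laplacian (fun y => Phi N t₀ β y t) x
      = (N : ℝ) * (D1 r * 2) + 4 * D2 r * r := by
    rw [laplacian]
    rw [Finset.sum_congr rfl (fun i _ => hfd2 i)]
    have hsum : ∑ i : Fin N, (x i) ^ 2 = r := by
      rw [hrdef, EuclideanSpace.norm_eq]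
      rw [Real.sq_sqrt (by positivity)]
      apply Finset.sum_congr rfl
      intro i _
      rw [Real.norm_eq_abs, sq_abs]
    calc ∑ i : Fin N, (D1 (‖x‖ ^ 2) * 2 + 2 * x i * (D2 (‖x‖ ^ 2) * (2 * x i)))
        = ∑ i : Fin N, (D1 r * 2 + 4 * D2 r * (x i) ^ 2) := by
          apply Finset.sum_congr rfl; intro i _; rw [← hrdef]; ring
      _ = (N : ℝ) * (D1 r * 2) + 4 * D2 r * ∑ i : Fin N, (x i) ^ 2 := by
          rw [Finset.sum_add_distrib, Finset.sum_const, Finset.mul_sum]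
          simp only [Finset.card_univ, Fintype.card_fin, nsmul_eq_mul]
      _ = (N : ℝ) * (D1 r * 2) + 4 * D2 r * r := by rw [hsum]
  rw [hlap]
  -- ===== final algebra =====
  have hode := KAux.W_ode (a := a) (c := c) hc z
  have hca : c - a = β := by rw [hcdef, hadef]; ring
  rw [hca] at hode
  have hA1 : (t₀ + t) ^ (-β - 1) = (t₀ + t) ^ (-β) * (t₀ + t)⁻¹ := by
    rw [show (-β - 1 : ℝ) = -β + -1 by ring, Real.rpow_add hτ, Real.rpow_neg_one]
  have hr4 : r = 4 * (t₀ + t) * z := by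
    rw [hzdef]; field_simp
  rw [hA1, hD1def, hD2def, hr4]
  beta_reduce
  have h4z : 4 * (t₀ + t) * z / (4 * (t₀ + t)) = z := by field_simp
  rw [h4z]
  have hTne : (t₀ + t) ≠ 0 := hτ.ne'
  have hkey : -(β * KAux.W a c z) - z * KAux.W1 a c z
      = ((N:ℝ) / 2) * KAux.W1 a c z + z * KAux.W2 a c z := by
    rw [hcdef] at hode
    linarith
  trans ((t₀ + t) ^ (-β) * (t₀ + t)⁻¹ *
      (((N:ℝ) / 2) * KAux.W1 a c z + z * KAux.W2 a c z))
  · rw [← hkey]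
    field_simp
    ring
  · field_simp
    ring
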